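/- Let σ > c ≥ 0, a > 0, N ≥ 1, and let g_N(0) = σ, g_N(k) = 0 for 1 ≤ k ≤ N, g_N(k) = c for k > N. Let (y_k(g_N)) solve the recurrence (R) for g_N. Then the series ∑_{k≥0} y_k(g_N) converges if and only if σ e^{−a} > c. -/

import Mathlib

open Finset

set_option maxHeartbeats 1600000 in
theorem gN_series_convergence_iff
    (σ c a : ℝ) (hσc : c < σ) (hc : 0 ≤ c) (ha : 0 < a)
    (N : ℕ) (hN : 1 ≤ N)
    (g : ℕ → ℝ) (hg0 : g 0 = σ)
    (hg1 : ∀ k, 1 ≤ k → k ≤ N → g k = 0)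
    (hg2 : ∀ k, N < k → g k = c)
    (y : ℕ → ℝ) (hy0 : y 0 = 1)
    (hy : ∀ k, 1 ≤ k →
      y k = (1 / (g 0 - g k)) *
        ∑ j ∈ Finset.range k, y j * g j * a ^ (k - j) / (Nat.factorial (k - j))) :
    Summable y ↔ c < σ * Real.exp (-a) := by
  have hσ : 0 < σ := lt_of_le_of_lt hc hσc
  have hglec : ∀ k, 1 ≤ k → g k ≤ c := by
    intro k hk
    rcases le_or_gt k N with h | h
    · rw [hg1 k hk h]; exact hc
    · rw [hg2 k h]
  have hgnn : ∀ k, 0 ≤ g k := by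
    intro k
    rcases Nat.eq_zero_or_pos k with h | h
    · subst h; rw [hg0]; exact hσ.le
    rcases le_or_gt k N with h2 | h2
    · rw [hg1 k h h2]
    · rw [hg2 k h2]; exact hc
  have hsub : ∀ k, 1 ≤ k → 0 < σ - g k := by
    intro k hk
    have := hglec k hk; linarith
  have hrec : ∀ k, 1 ≤ k → (σ - g k) * y k
      = ∑ j ∈ Finset.range k, y j * g j * a ^ (k - j) / (Nat.factorial (k - j)) := by
    intro k hk
    rw [hy k hk, hg0]
    have := (hsub k hk).ne'
    field_simp
  have hynn : ∀ k, 0 ≤ y k := by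
    intro k
    induction k using Nat.strong_induction_on with
    | _ k ih =>
      rcases Nat.eq_zero_or_pos k with h | h
      · subst h; rw [hy0]; exact zero_le_one
      rw [hy k h, hg0]
      apply mul_nonneg (le_of_lt (by have := hsub k h; positivity))
      apply Finset.sum_nonneg
      intro j hj
      have hyj := ih j (Finset.mem_range.mp hj)
      have hgj := hgnn j
      positivity
  have hyN : ∀ k, k ≤ N → y k = a ^ k / (Nat.factorial k) := by
    intro k hkN
    rcases Nat.eq_zero_or_pos k with h | h
    · subst h; simp [hy0]
    have hgk : g k = 0 := hg1 k h hkN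
    rw [hy k h, hg0, hgk, sub_zero]
    rw [Finset.sum_eq_single 0]
    · rw [hy0, hg0]
      field_simp
      simp only [Nat.sub_zero]; ring
    · intro j hj hj0
      have hj1 : 1 ≤ j := Nat.one_le_iff_ne_zero.mpr hj0
      have hjk : j < k := Finset.mem_range.mp hj
      rw [hg1 j hj1 (by omega)]
      ring
    · intro h0
      exact absurd (Finset.mem_range.mpr h) h0
  constructor
  · -- Summable → c < σ exp(-a)
    intro hs
    by_contra hlt
    push_neg at hlt
    have hc0 : 0 < c := lt_of_lt_of_le (by positivity) hlt
    set x : ℝ := Real.log (σ / c) / a with hxdef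
    have hσc' : 1 < σ / c := (one_lt_div hc0).mpr hσc
    have hlog : 0 < Real.log (σ / c) := Real.log_pos hσc'
    have hx0 : 0 < x := div_pos hlog ha
    have hax : a * x = Real.log (σ / c) := by
      rw [hxdef]; field_simp
    have hcex : c * Real.exp (a * x) = σ := by
      rw [hax, Real.exp_log (by positivity)]
      field_simp
    have hx1 : x ≤ 1 := by
      have h1 : σ ≤ c * Real.exp a := by
        have h2 := mul_le_mul_of_nonneg_right hlt (Real.exp_pos a).le
        rwa [mul_assoc, ← Real.exp_add, neg_add_cancel, Real.exp_zero, mul_one] at h2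
      have h3 : σ / c ≤ Real.exp a := by
        rw [div_le_iff₀ hc0]; linarith
      have h4 : Real.log (σ / c) ≤ a := by
        calc Real.log (σ / c) ≤ Real.log (Real.exp a) :=
              Real.log_le_log (by positivity) h3
          _ = a := Real.log_exp a
      rw [hxdef, div_le_one ha]; exact h4
    set b : ℝ := a * x with hbdef
    have hb0 : 0 < b := mul_pos ha hx0
    set Y : ℕ → ℝ := fun k => y k * x ^ k with hYdef
    have hYnn : ∀ k, 0 ≤ Y k := fun k => mul_nonneg (hynn k) (by positivity)
    have hYle : ∀ k, Y k ≤ y k := by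
      intro k
      have hxk : x ^ k ≤ 1 := pow_le_one₀ hx0.le hx1
      have := mul_le_mul_of_nonneg_left hxk (hynn k)
      simpa [hYdef] using this
    have hYs : Summable Y := Summable.of_nonneg_of_le hYnn hYle hs
    set u : ℕ → ℝ := fun j => y j * g j * x ^ j with hudef
    have hunn : ∀ j, 0 ≤ u j := by
      intro j
      have h1 := hynn j; have h2 := hgnn j
      simp only [hudef]; positivity
    have hus : Summable u := by
      apply Summable.of_nonneg_of_le hunn ?_ (hYs.mul_left σ)
      intro j
      have hgσ : g j ≤ σ := by
        rcases Nat.eq_zero_or_pos j with h | h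
        · subst h; rw [hg0]
        · exact le_of_lt (lt_of_le_of_lt (hglec j h) hσc)
      have h1 := hynn j
      have h2 : (0:ℝ) ≤ x ^ j := by positivity
      simp only [hudef, hYdef]
      nlinarith [mul_le_mul_of_nonneg_right (mul_le_mul_of_nonneg_left hgσ h1) h2]
    set v : ℕ → ℝ := fun i => if i = 0 then 0 else b ^ i / (Nat.factorial i) with hvdef
    have hvnn : ∀ i, 0 ≤ v i := by
      intro i; simp only [hvdef]
      split
      · exact le_refl 0
      · positivity
    have hvs : Summable v := by
      apply Summable.of_nonneg_of_le hvnn ?_ (Real.summable_pow_div_factorial b)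
      intro i; simp only [hvdef]
      split
      · positivity
      · exact le_refl _
    have hexp : ∑' i : ℕ, b ^ i / (Nat.factorial i : ℝ) = Real.exp b := by
      rw [Real.exp_eq_exp_ℝ, NormedSpace.exp_eq_tsum_div]
    have hvsum : ∑' i, v i = Real.exp b - 1 := by
      have h2 : ∀ i : ℕ, v i = b ^ i / (Nat.factorial i : ℝ) - (if i = 0 then (1:ℝ) else 0) := by
        intro i
        simp only [hvdef]
        rcases eq_or_ne i 0 with h | h
        · subst h; norm_num
        · simp [h]
      rw [tsum_congr h2,
        Summable.tsum_sub (Real.summable_pow_div_factorial b) ((hasSum_ite_eq (0:ℕ) (1:ℝ)).summable),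
        hexp, (hasSum_ite_eq (0:ℕ) (1:ℝ)).tsum_eq]
    have hnu : (fun i => ‖u i‖) = u := funext fun i => by
      rw [Real.norm_eq_abs, abs_of_nonneg (hunn i)]
    have hnv : (fun i => ‖v i‖) = v := funext fun i => by
      rw [Real.norm_eq_abs, abs_of_nonneg (hvnn i)]
    have hcauchy : ((∑' n, u n) * ∑' n, v n) = ∑' n, ∑ k ∈ Finset.range (n+1), u k * v (n - k) := by
      apply tsum_mul_tsum_eq_tsum_sum_range_of_summable_norm
      · rw [hnu]; exact hus
      · rw [hnv]; exact hvs
    have hW : ∀ n, (∑ k ∈ Finset.range (n+1), u k * v (n - k)) = (σ - g n) * Y n := by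
      intro n
      rcases Nat.eq_zero_or_pos n with h | h
      · subst h; simp [hudef, hvdef, hg0, hYdef, hy0]
      rw [Finset.sum_range_succ]
      have hv0 : v (n - n) = 0 := by simp [hvdef]
      rw [hv0, mul_zero, add_zero]
      have hterm : ∀ k ∈ Finset.range n,
          u k * v (n - k) = (y k * g k * a ^ (n - k) / (Nat.factorial (n - k) : ℝ)) * x ^ n := by
        intro k hk
        have hkn : k < n := Finset.mem_range.mp hk
        have hnk : n - k ≠ 0 := Nat.sub_ne_zero_of_lt hkn
        simp only [hudef, hvdef, if_neg hnk]
        have hxx : x ^ k * x ^ (n - k) = x ^ n := by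
          rw [← pow_add]; congr 1; omega
        have hbb : b ^ (n - k) = a ^ (n - k) * x ^ (n - k) := by
          rw [hbdef, mul_pow]
        rw [hbb, ← hxx]
        ring
      rw [Finset.sum_congr rfl hterm, ← Finset.sum_mul, ← hrec n h]
      simp only [hYdef]; ring
    have hLs : (fun n => (σ - g n) * Y n) = fun n => σ * Y n - u n := funext fun n => by
      simp only [hudef, hYdef]; ring
    have hkey : σ * (∑' n, Y n) = (∑' n, u n) * Real.exp b := by
      have h1 : ∑' n, ((σ - g n) * Y n) = (∑' n, u n) * (Real.exp b - 1) := by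
        rw [← hvsum, hcauchy]
        exact tsum_congr (fun n => (hW n).symm)
      rw [hLs, Summable.tsum_sub (hYs.mul_left σ) hus, tsum_mul_left] at h1
      linarith [h1]
    set P : ℝ := ∑ n ∈ Finset.range (N+1), Y n with hPdef
    have hU : ∑' n, u n = c * (∑' n, Y n) + (σ - c * P) := by
      have hws : Summable (fun n => u n - c * Y n) := hus.sub (hYs.mul_left c)
      have hsupp : ∀ n ∉ Finset.range (N+1), u n - c * Y n = 0 := by
        intro n hn
        have hNn : N < n := by
          simp only [Finset.mem_range, not_lt] at hn; omega
        simp only [hudef, hYdef, hg2 n hNn]; ring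
      have h1 : ∑' n, (u n - c * Y n) = ∑ n ∈ Finset.range (N+1), (u n - c * Y n) :=
        tsum_eq_sum hsupp
      have h2 : ∑ n ∈ Finset.range (N+1), (u n - c * Y n) = σ - c * P := by
        rw [Finset.sum_sub_distrib, ← Finset.mul_sum, ← hPdef]
        congr 1
        have h3 : ∀ n ∈ Finset.range (N+1), u n = if n = 0 then σ else 0 := by
          intro n hn
          rcases eq_or_ne n 0 with h | h
          · subst h; simp [hudef, hy0, hg0]
          · have h4 : 1 ≤ n := Nat.one_le_iff_ne_zero.mpr h
            have h5 : n ≤ N := Nat.lt_succ_iff.mp (Finset.mem_range.mp hn)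
            simp only [hudef, hg1 n h4 h5, if_neg h]; ring
        rw [Finset.sum_congr rfl h3, Finset.sum_ite_eq' (Finset.range (N+1)) 0 (fun _ => σ)]
        simp
      have h4 : ∑' n, u n = ∑' n, (u n - c * Y n) + ∑' n, (c * Y n) := by
        rw [← Summable.tsum_add hws (hYs.mul_left c)]
        exact tsum_congr (fun n => by ring)
      rw [h4, h1, h2, tsum_mul_left]
      ring
    have hcontr : σ - c * P = 0 := by
      rw [hU] at hkey
      have hE := Real.exp_pos b
      have h6 : (σ - c * P) * Real.exp b = (σ - c * Real.exp b) * (∑' n, Y n) := by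
        linear_combination -hkey
      rw [hcex, sub_self, zero_mul] at h6
      exact (mul_eq_zero.mp h6).resolve_right hE.ne'
    have hPval : P = ∑ n ∈ Finset.range (N+1), b ^ n / (Nat.factorial n : ℝ) := by
      apply Finset.sum_congr rfl
      intro n hn
      have hnN : n ≤ N := Nat.lt_succ_iff.mp (Finset.mem_range.mp hn)
      simp only [hYdef]
      rw [hyN n hnN, hbdef, mul_pow]
      ring
    have hPlt : c * P < σ := by
      have h1 : ∑ n ∈ Finset.range (N+2), b ^ n / (Nat.factorial n : ℝ) ≤ Real.exp b :=
        Real.sum_le_exp_of_nonneg hb0.le (N+2)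
      rw [Finset.sum_range_succ] at h1
      have h2 : 0 < b ^ (N+1) / (Nat.factorial (N+1) : ℝ) := by positivity
      have h3 : P < Real.exp b := by
        rw [hPval]; linarith
      calc c * P < c * Real.exp b := by nlinarith
        _ = σ := hcex
    linarith
  · -- c < σ exp(-a) → Summable
    intro hca
    have hcea : c * Real.exp a < σ := by
      have h := mul_lt_mul_of_pos_right hca (Real.exp_pos a)
      rwa [mul_assoc, ← Real.exp_add, neg_add_cancel, Real.exp_zero, mul_one] at h
    obtain ⟨r, hr1, hrσ⟩ : ∃ r : ℝ, 1 < r ∧ c * Real.exp (a * r) < σ := by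
      rcases eq_or_lt_of_le hc with hc0 | hc0
      · exact ⟨2, one_lt_two, by rw [← hc0]; simpa using hσ⟩
      · have hlog : a < Real.log (σ / c) := by
          have h1 : Real.exp a < σ / c := (lt_div_iff₀ hc0).mpr (by linarith)
          have h2 := Real.log_lt_log (Real.exp_pos a) h1
          rwa [Real.log_exp] at h2
        refine ⟨(1 + Real.log (σ / c) / a) / 2, ?_, ?_⟩
        · have h3 : 1 < Real.log (σ / c) / a := (one_lt_div ha).mpr hlog
          linarith
        · have har : a * ((1 + Real.log (σ / c) / a) / 2) < Real.log (σ / c) := by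
            have h4 : a * ((1 + Real.log (σ / c) / a) / 2) = (a + Real.log (σ / c)) / 2 := by
              field_simp
            rw [h4]; linarith
          have h5 := Real.exp_lt_exp.mpr har
          rw [Real.exp_log (by positivity)] at h5
          calc c * Real.exp (a * ((1 + Real.log (σ / c) / a) / 2))
              < c * (σ / c) := by nlinarith
            _ = σ := by field_simp
    have hr0 : 0 < r := lt_trans one_pos hr1
    set R : ℝ := Real.exp (a * r) with hRdef
    have hR1 : 1 ≤ R := Real.one_le_exp (by positivity)
    have hden : 0 < σ - c * R := by linarith
    set M : ℝ := σ * R / (σ - c * R) with hMdef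
    have hMR : M * (σ - c * R) = σ * R := by
      rw [hMdef]; field_simp
      exact div_self (ne_of_gt (by linarith))
    have hM1 : 1 ≤ M := by
      rw [hMdef, le_div_iff₀ hden]; nlinarith
    have hterm : ∀ n : ℕ, (a * r) ^ n / (Nat.factorial n : ℝ) ≤ R := by
      intro n
      have h1 := Real.sum_le_exp_of_nonneg (by positivity : (0:ℝ) ≤ a * r) (n+1)
      have h2 : (a*r) ^ n / (Nat.factorial n : ℝ)
          ≤ ∑ i ∈ Finset.range (n+1), (a*r) ^ i / (Nat.factorial i : ℝ) := by
        apply Finset.single_le_sum (f := fun i => (a*r) ^ i / (Nat.factorial i : ℝ))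
        · intro i _; positivity
        · exact Finset.self_mem_range_succ n
      rw [hRdef]; exact le_trans h2 h1
    have hbound : ∀ k, y k ≤ M / r ^ k := by
      intro k
      induction k using Nat.strong_induction_on with
      | _ k ih =>
        rcases Nat.eq_zero_or_pos k with h | h
        · subst h; simpa [hy0] using hM1
        obtain ⟨m, rfl⟩ : ∃ m, k = m + 1 := ⟨k - 1, by omega⟩
        have hfin : σ * R + c * M * (R - 1) = (σ - c) * M := by
          linear_combination -hMR
        have hSS : ∑ j ∈ Finset.range (m+1), y j * g j * a ^ (m+1-j) / (Nat.factorial (m+1-j) : ℝ)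
            ≤ (σ - c) * (M / r ^ (m+1)) := by
          rw [Finset.sum_range_succ']
          have h0 : y 0 * g 0 * a ^ (m+1-0) / (Nat.factorial (m+1-0) : ℝ) ≤ σ * R / r ^ (m+1) := by
            simp only [Nat.sub_zero, hy0, hg0, one_mul]
            have h1 := hterm (m+1)
            have key : σ * a ^ (m+1) / (Nat.factorial (m+1) : ℝ)
                = σ * ((a*r) ^ (m+1) / (Nat.factorial (m+1) : ℝ)) / r ^ (m+1) := by
              rw [mul_pow]; field_simp
            rw [key]
            gcongr
          have h1 : ∑ i ∈ Finset.range m,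
              y (i+1) * g (i+1) * a ^ (m+1-(i+1)) / (Nat.factorial (m+1-(i+1)) : ℝ)
              ≤ c * M * (R - 1) / r ^ (m+1) := by
            have hstep : ∀ i ∈ Finset.range m,
                y (i+1) * g (i+1) * a ^ (m+1-(i+1)) / (Nat.factorial (m+1-(i+1)) : ℝ)
                ≤ (c * M / r ^ (m+1)) * ((a*r) ^ (m-i) / (Nat.factorial (m-i) : ℝ)) := by
              intro i hi
              have him : i < m := Finset.mem_range.mp hi
              have hyi := ih (i+1) (by omega)
              have hgi := hglec (i+1) (by omega)
              have e1 : m + 1 - (i+1) = m - i := by omega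
              rw [e1]
              have hA : y (i+1) * g (i+1) ≤ (M / r ^ (i+1)) * c :=
                mul_le_mul hyi hgi (hgnn _) (by positivity)
              have h2 : (0:ℝ) ≤ a ^ (m-i) / (Nat.factorial (m-i) : ℝ) := by positivity
              have hrr : r ^ (i+1) * r ^ (m-i) = r ^ (m+1) := by
                rw [← pow_add]; congr 1; omega
              calc y (i+1) * g (i+1) * a ^ (m-i) / (Nat.factorial (m-i) : ℝ)
                  = (y (i+1) * g (i+1)) * (a ^ (m-i) / (Nat.factorial (m-i) : ℝ)) := by ring
                _ ≤ ((M / r ^ (i+1)) * c) * (a ^ (m-i) / (Nat.factorial (m-i) : ℝ)) :=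
                    mul_le_mul_of_nonneg_right hA h2
                _ = (c * M / r ^ (m+1)) * ((a*r) ^ (m-i) / (Nat.factorial (m-i) : ℝ)) := by
                    rw [mul_pow, ← hrr]
                    have hfac : (0:ℝ) < (Nat.factorial (m-i) : ℝ) := by positivity
                    field_simp
            have hrefl : ∑ i ∈ Finset.range m, (a*r) ^ (m-i) / (Nat.factorial (m-i) : ℝ)
                = ∑ i ∈ Finset.range m, (a*r) ^ (i+1) / (Nat.factorial (i+1) : ℝ) := by
              rw [← Finset.sum_range_reflect
                (fun j => (a*r) ^ (j+1) / (Nat.factorial (j+1) : ℝ)) m]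
              apply Finset.sum_congr rfl
              intro i hi
              have him : i < m := Finset.mem_range.mp hi
              have e2 : m - 1 - i + 1 = m - i := by omega
              rw [e2]
            have hsumle : ∑ i ∈ Finset.range m, (a*r) ^ (i+1) / (Nat.factorial (i+1) : ℝ) ≤ R - 1 := by
              have h3 := Real.sum_le_exp_of_nonneg (by positivity : (0:ℝ) ≤ a * r) (m+1)
              rw [Finset.sum_range_succ'] at h3
              norm_num at h3
              rw [hRdef]; linarith
            calc ∑ i ∈ Finset.range m,
                y (i+1) * g (i+1) * a ^ (m+1-(i+1)) / (Nat.factorial (m+1-(i+1)) : ℝ)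
                ≤ ∑ i ∈ Finset.range m,
                  (c * M / r ^ (m+1)) * ((a*r) ^ (m-i) / (Nat.factorial (m-i) : ℝ)) :=
                  Finset.sum_le_sum hstep
              _ = (c * M / r ^ (m+1)) * ∑ i ∈ Finset.range m, (a*r) ^ (m-i) / (Nat.factorial (m-i) : ℝ) := by
                  rw [Finset.mul_sum]
              _ = (c * M / r ^ (m+1)) * ∑ i ∈ Finset.range m, (a*r) ^ (i+1) / (Nat.factorial (i+1) : ℝ) := by
                  rw [hrefl]
              _ ≤ (c * M / r ^ (m+1)) * (R - 1) := by
                  apply mul_le_mul_of_nonneg_left hsumle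
                  have : (0:ℝ) ≤ c * M := mul_nonneg hc (by linarith)
                  positivity
              _ = c * M * (R - 1) / r ^ (m+1) := by ring
          have heq : σ * R / r ^ (m+1) + c * M * (R - 1) / r ^ (m+1) = (σ - c) * (M / r ^ (m+1)) := by
            rw [← add_div, hfin]
            ring
          linarith [add_le_add h1 h0]
        rw [hy (m+1) (by omega), hg0]
        have hsb := hsub (m+1) (by omega)
        have hgle := hglec (m+1) (by omega)
        have h2 : 1/(σ - g (m+1)) ≤ 1/(σ - c) := by
          apply one_div_le_one_div_of_le (by linarith) (by linarith)
        calc 1/(σ - g (m+1)) * ∑ j ∈ Finset.range (m+1),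
              y j * g j * a ^ (m+1-j) / (Nat.factorial (m+1-j) : ℝ)
            ≤ 1/(σ - g (m+1)) * ((σ - c) * (M / r ^ (m+1))) := by
              apply mul_le_mul_of_nonneg_left hSS (by positivity)
          _ ≤ 1/(σ - c) * ((σ - c) * (M / r ^ (m+1))) := by
              apply mul_le_mul_of_nonneg_right h2
              have hMnn : (0:ℝ) ≤ M := by linarith
              have : (0:ℝ) ≤ σ - c := by linarith
              positivity
          _ = M / r ^ (m+1) := by
              have : σ - c ≠ 0 := by linarith
              field_simp
    have hgeo : Summable (fun k : ℕ => M * (1/r) ^ k) := by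
      apply Summable.mul_left M
      apply summable_geometric_of_lt_one (by positivity)
      rw [div_lt_one hr0]; exact hr1
    apply Summable.of_nonneg_of_le hynn ?_ hgeo
    intro k
    have := hbound k
    rwa [div_pow, one_pow, mul_one_div]
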